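/- In the setting of the context, for every real λ > K₊ the map a ↦ T a − λ·a is a bijection of ℓ^q onto itself; that is, T − λ·I is an isomorphism of ℓ^q. -/

import Mathlib

open Filter

theorem stmt10 (q : ℝ) (hq : 1 ≤ q) [Fact (1 ≤ ENNReal.ofReal q)]
    (μ : ℕ → ℝ) (hμ : ∀ k, 0 < μ k)
    (M : ℝ) (hM : 1 ≤ M)
    (hM1 : ∀ k, μ k ≤ M * μ (k + 1)) (hM2 : ∀ k, μ (k + 1) ≤ M * μ k)
    (T : lp (fun _ : ℕ => ℝ) (ENNReal.ofReal q) →L[ℝ] lp (fun _ : ℕ => ℝ) (ENNReal.ofReal q))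
    (hT0 : ∀ a, (T a : ∀ _ : ℕ, ℝ) 0 = 0)
    (hTk : ∀ a (k : ℕ), (T a : ∀ _ : ℕ, ℝ) (k + 1) = (μ (k + 1) / μ k) * (a : ∀ _ : ℕ, ℝ) k)
    (hbddR : ∀ n : ℕ, BddAbove (Set.range fun k => μ (k + n) / μ k))
    (hbddL : ∀ n : ℕ, BddAbove (Set.range fun k => μ k / μ (k + n)))
    (Kp Km : ℝ) (hKp : 0 < Kp) (hKm : 0 < Km)
    (hKplim : Tendsto (fun n : ℕ => (⨆ k : ℕ, μ (k + n) / μ k) ^ (1 / (n : ℝ))) atTop (nhds Kp))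
    (hKmlim : Tendsto (fun n : ℕ => (⨆ k : ℕ, μ k / μ (k + n)) ^ (1 / (n : ℝ))) atTop (nhds Km))
    (lam : ℝ) (hlam : Kp < lam) :
    Function.Bijective (fun a : lp (fun _ : ℕ => ℝ) (ENNReal.ofReal q) => T a - lam • a) := by
  classical
  set E := lp (fun _ : ℕ => ℝ) (ENNReal.ofReal q)
  have hq0 : (0:ℝ) < q := lt_of_lt_of_le one_pos hq
  have hp : (ENNReal.ofReal q).toReal = q := ENNReal.toReal_ofReal hq0.le
  set R : ℕ → ℝ := fun n => ⨆ k : ℕ, μ (k + n) / μ k with hRdef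
  have hRk : ∀ n k, μ (k + n) / μ k ≤ R n := fun n k => le_ciSup (hbddR n) k
  have hR0 : ∀ n, 0 < R n := by
    intro n
    have := hRk n 0
    have h0 : (0:ℝ) < μ (0 + n) / μ 0 := div_pos (hμ _) (hμ 0)
    linarith
  -- formula for powers of T
  have hpow : ∀ n : ℕ,
      (∀ a : E, ∀ k, ((T ^ n) a : ∀ _ : ℕ, ℝ) (k + n) = (μ (k + n) / μ k) * (a : ∀ _ : ℕ, ℝ) k)
      ∧ (∀ a : E, ∀ k, k < n → ((T ^ n) a : ∀ _ : ℕ, ℝ) k = 0) := by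
    intro n
    induction n with
    | zero =>
      refine ⟨fun a k => ?_, fun a k hk => absurd hk (Nat.not_lt_zero k)⟩
      simp [pow_zero, ContinuousLinearMap.one_apply, div_self (hμ k).ne']
    | succ n ih =>
      have key : ∀ a : E, (T ^ (n + 1)) a = (T ^ n) (T a) := by
        intro a
        rw [pow_succ, ContinuousLinearMap.mul_apply]
      refine ⟨fun a k => ?_, fun a k hk => ?_⟩
      · have h1 : k + (n + 1) = (k + 1) + n := by ring
        rw [key, h1, ih.1 (T a) (k + 1), hTk a k, ← mul_assoc]
        congr 1
        rw [show k + 1 + n = k + (n + 1) from by ring, div_mul_div_comm,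
          mul_comm (μ (k + (n + 1))) (μ (k + 1)), mul_div_mul_left _ _ (hμ (k + 1)).ne']
      · rw [key]
        rcases Nat.lt_or_ge k n with h | h
        · exact ih.2 (T a) k h
        · have hkn : k = n := le_antisymm (Nat.lt_succ_iff.mp hk) h
          subst hkn
          have h2 := ih.1 (T a) 0
          rw [zero_add] at h2
          rw [h2, hT0 a, mul_zero]
  -- norm bound for powers of T
  have hnorm : ∀ n : ℕ, ∀ a : E, ‖(T ^ n) a‖ ≤ R n * ‖a‖ := by
    intro n a
    have hb : ∀ x : E, ‖x‖ ^ q = ∑' k : ℕ, ‖(x : ∀ _ : ℕ, ℝ) k‖ ^ q := by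
      intro x
      have := lp.norm_rpow_eq_tsum (p := ENNReal.ofReal q) (by rw [hp]; exact hq0) x
      rwa [hp] at this
    have h1 : ‖(T ^ n) a‖ ^ q = ∑' k : ℕ, ‖((T ^ n) a : ∀ _ : ℕ, ℝ) (k + n)‖ ^ q := by
      rw [hb]
      refine (Function.Injective.tsum_eq (g := fun k : ℕ => k + n) (add_left_injective n) ?_).symm
      intro x hx
      by_contra hxr
      have hxn : x < n := by
        by_contra hge
        push_neg at hge
        exact hxr ⟨x - n, Nat.sub_add_cancel hge⟩
      have := (hpow n).2 a x hxn
      simp only [Function.mem_support, this, norm_zero, Real.zero_rpow hq0.ne', ne_eq, not_true_eq_false] at hx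
    have hterm : ∀ k : ℕ, ‖((T ^ n) a : ∀ _ : ℕ, ℝ) (k + n)‖ ^ q
        ≤ R n ^ q * ‖(a : ∀ _ : ℕ, ℝ) k‖ ^ q := by
      intro k
      rw [(hpow n).1 a k, norm_mul, Real.mul_rpow (norm_nonneg _) (norm_nonneg _)]
      have hc : ‖μ (k + n) / μ k‖ ^ q ≤ R n ^ q := by
        refine Real.rpow_le_rpow (norm_nonneg _) ?_ hq0.le
        rw [Real.norm_of_nonneg (div_pos (hμ _) (hμ _)).le]
        exact hRk n k
      exact mul_le_mul_of_nonneg_right hc (Real.rpow_nonneg (norm_nonneg _) q)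
    have hsum2 : Summable fun k : ℕ => R n ^ q * ‖(a : ∀ _ : ℕ, ℝ) k‖ ^ q := by
      have := ((lp.memℓp a).summable (by rw [hp]; exact hq0))
      rw [hp] at this
      exact this.mul_left _
    have hsum1 : Summable fun k : ℕ => ‖((T ^ n) a : ∀ _ : ℕ, ℝ) (k + n)‖ ^ q :=
      Summable.of_nonneg_of_le (fun k => Real.rpow_nonneg (norm_nonneg _) q) hterm hsum2
    have h2 : ‖(T ^ n) a‖ ^ q ≤ (R n * ‖a‖) ^ q := by
      rw [h1, Real.mul_rpow (hR0 n).le (norm_nonneg _), hb a, ← tsum_mul_left]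
      exact Summable.tsum_le_tsum hterm hsum1 hsum2
    by_contra hcon
    push_neg at hcon
    have := Real.rpow_lt_rpow (mul_nonneg (hR0 n).le (norm_nonneg _)) hcon hq0
    linarith
  have hTn : ∀ n : ℕ, ‖T ^ n‖ ≤ R n := fun n =>
    ContinuousLinearMap.opNorm_le_bound _ (hR0 n).le (hnorm n)
  -- choose n with R n ^ (1/n) < lam
  obtain ⟨n₀, hn₀lt, hn₀ge⟩ : ∃ n : ℕ, R n ^ (1 / (n : ℝ)) < lam ∧ 1 ≤ n := by
    have hev : ∀ᶠ n : ℕ in atTop, R n ^ (1 / (n : ℝ)) < lam :=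
      hKplim.eventually (eventually_lt_nhds hlam) |>.mono (fun n h => h)
    obtain ⟨n, h1, h2⟩ := (hev.and (eventually_ge_atTop 1)).exists
    exact ⟨n, h1, h2⟩
  obtain ⟨m, rfl⟩ : ∃ m, n₀ = m + 1 := ⟨n₀ - 1, (Nat.succ_pred_eq_of_pos hn₀ge).symm⟩
  have hlam0 : 0 < lam := lt_trans hKp hlam
  -- spectral radius bound
  have hsr : spectralRadius ℝ T < ‖lam‖₊ := by
    have hb1 : (‖(T ^ (m + 1))‖₊ : ENNReal) ≤ ENNReal.ofReal (R (m + 1)) := by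
      rw [← ENNReal.ofReal_coe_nnreal, coe_nnnorm]
      exact ENNReal.ofReal_le_ofReal (hTn (m + 1))
    have hone : (‖(1 : E →L[ℝ] E)‖₊ : ENNReal) ^ (1 / ((m : ℝ) + 1)) ≤ 1 := by
      refine ENNReal.rpow_le_one ?_ (by positivity)
      rw [← ENNReal.ofReal_coe_nnreal, coe_nnnorm]
      exact ENNReal.ofReal_le_one.mpr ContinuousLinearMap.norm_id_le
    calc spectralRadius ℝ T
        ≤ (‖T ^ (m + 1)‖₊ : ENNReal) ^ (1 / ((m : ℝ) + 1)) *
            (‖(1 : E →L[ℝ] E)‖₊ : ENNReal) ^ (1 / ((m : ℝ) + 1)) :=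
          spectrum.spectralRadius_le_pow_nnnorm_pow_one_div ℝ T m
      _ ≤ (‖T ^ (m + 1)‖₊ : ENNReal) ^ (1 / ((m : ℝ) + 1)) * 1 :=
          mul_le_mul_right hone _
      _ ≤ (ENNReal.ofReal (R (m + 1))) ^ (1 / ((m : ℝ) + 1)) * 1 := by
          gcongr
      _ < ‖lam‖₊ := by
          rw [mul_one, ENNReal.ofReal_rpow_of_pos (hR0 (m + 1)),
            ← ENNReal.ofReal_coe_nnreal, coe_nnnorm, Real.norm_of_nonneg hlam0.le]
          refine ENNReal.ofReal_lt_ofReal_iff hlam0 |>.mpr ?_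
          have : ((m + 1 : ℕ) : ℝ) = (m : ℝ) + 1 := by push_cast; ring
          rw [← this]
          exact hn₀lt
  have hres : lam ∈ resolventSet ℝ T := spectrum.mem_resolventSet_of_spectralRadius_lt hsr
  rw [spectrum.mem_resolventSet_iff] at hres
  obtain ⟨u, hu⟩ := hres
  have hbij : Function.Bijective ⇑(algebraMap ℝ (E →L[ℝ] E) lam - T) := by
    rw [← hu]
    refine Function.bijective_iff_has_inverse.mpr ⟨⇑(↑u⁻¹ : E →L[ℝ] E), fun x => ?_, fun x => ?_⟩
    · rw [← ContinuousLinearMap.mul_apply, ← Units.val_mul, inv_mul_cancel, Units.val_one,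
        ContinuousLinearMap.one_apply]
    · rw [← ContinuousLinearMap.mul_apply, ← Units.val_mul, mul_inv_cancel, Units.val_one,
        ContinuousLinearMap.one_apply]
  have heq : (fun a : E => T a - lam • a) = (fun x : E => -x) ∘ ⇑(algebraMap ℝ (E →L[ℝ] E) lam - T) := by
    funext a
    simp only [Function.comp_apply, ContinuousLinearMap.sub_apply,
      Algebra.algebraMap_eq_smul_one, ContinuousLinearMap.smul_apply,
      ContinuousLinearMap.one_apply, neg_sub]
  rw [heq]
  exact neg_involutive.bijective.comp hbij
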